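/- Let G be a connected simple graph and H a subgraph of G with strictly fewer vertices than G, where H is a (not necessarily induced) subgraph. Then min{ k_i(H) : i a vertex of H, k_i(H) > 1 } < min{ k_i(G) : i ∈ V(G), k_i(G) > 1 }, provided both minima are taken over nonempty sets; that is, the quantity min_{k_i>1} k_i − 1 is strictly smaller for H than for G. -/

import Mathlib

set_option linter.unusedSectionVars false

open scoped Classical

/-- `k_i(Γ)` for a graph `Γ` on a finite vertex type: the number of vertex
subsets `I` containing `i` whose induced subgraph is connected. -/
noncomputable def kOf {V : Type*} [Fintype V] (G : SimpleGraph V) (i : V) : ℕ :=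
  (Finset.univ.filter fun I : Finset V =>
    i ∈ I ∧ (G.induce (I : Set V)).Connected).card

section Aux

variable {V : Type*} [Fintype V]

private lemma singletonConn (G : SimpleGraph V) (v : V) :
    (G.induce ({v} : Set V)).Connected := by
  have : Nonempty ({v} : Set V) := ⟨⟨v, rfl⟩⟩
  rw [SimpleGraph.induce_singleton_eq_top]
  exact SimpleGraph.connected_top

private lemma singletonConnF (G : SimpleGraph V) (v : V) :
    (G.induce ((({v} : Finset V) : Set V))).Connected := by
  rw [Finset.coe_singleton]; exact singletonConn G v

/-- If `x` is reachable from `m` and `k_m > 1` then `k_x > 1`. -/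
private lemma one_lt_kOf_of_reachable (H : SimpleGraph V) {m x : V}
    (hr : H.Reachable m x) (hm : 1 < kOf H m) : 1 < kOf H x := by
  classical
  by_cases hmx : m = x
  · exact hmx ▸ hm
  obtain ⟨w⟩ := hr.symm
  rw [kOf, Finset.one_lt_card]
  refine ⟨{x}, ?_, w.support.toFinset, ?_, ?_⟩
  · rw [Finset.mem_filter]
    exact ⟨Finset.mem_univ _, Finset.mem_singleton_self x, singletonConnF H x⟩
  · simp only [Finset.mem_filter, Finset.mem_univ, true_and, List.mem_toFinset]
    refine ⟨w.start_mem_support, ?_⟩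
    have := w.connected_induce_support
    have hs : (↑w.support.toFinset : Set V) = {v | v ∈ w.support} := by
      ext y; simp
    rwa [hs]
  · intro h
    have : m ∈ ({x} : Finset V) := by
      rw [h]; simp [w.end_mem_support]
    simp only [Finset.mem_singleton] at this
    exact hmx this

/-- Transfer connectivity of an induced subgraph of `H` to `G`. -/
private lemma image_connected (G : SimpleGraph V) (W : Finset V)
    (H : SimpleGraph {x // x ∈ W})
    (hsub : ∀ a b : {x // x ∈ W}, H.Adj a b → G.Adj a.1 b.1)
    (I : Finset {x // x ∈ W})
    (hI : (H.induce (I : Set {x // x ∈ W})).Connected) :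
    (G.induce (Subtype.val '' (I : Set {x // x ∈ W}))).Connected := by
  refine SimpleGraph.Connected.map
    (⟨fun x => ⟨x.1.1, ⟨x.1, x.2, rfl⟩⟩, ?_⟩ :
      H.induce (I : Set {x // x ∈ W}) →g G.induce (Subtype.val '' (I : Set {x // x ∈ W})))
    ?_ hI
  · intro a b hab
    exact hsub _ _ hab
  · rintro ⟨v, x, hxI, rfl⟩
    exact ⟨⟨x, hxI⟩, rfl⟩

/-- Prefix of a walk up to the first vertex in `C`. -/
private lemma prefix_lemma (G : SimpleGraph V) (C : Set V) {j t : V}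
    (w : G.Walk j t) (ht : t ∈ C) :
    ∃ (P : Finset V) (aa : V), aa ∈ C ∧ j ∈ P ∧ aa ∈ P ∧
      ((P : Set V) ∩ C = {aa}) ∧ (G.induce (P : Set V)).Connected := by
  classical
  revert ht
  induction w with
  | @nil u =>
    intro hu
    refine ⟨{u}, u, hu, by simp, by simp, ?_, singletonConnF G u⟩
    simp only [Finset.coe_singleton]
    exact Set.inter_eq_self_of_subset_left (by simpa using hu)
  | @cons u v tt h p ih =>
    intro ht
    by_cases hu : u ∈ C
    · refine ⟨{u}, u, hu, by simp, by simp, ?_, singletonConnF G u⟩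
      simp only [Finset.coe_singleton]
      exact Set.inter_eq_self_of_subset_left (by simpa using hu)
    · obtain ⟨P, aa, haC, hvP, haP, hPC, hPconn⟩ := ih ht
      refine ⟨insert u P, aa, haC, by simp, by simp [haP], ?_, ?_⟩
      · rw [Finset.coe_insert, Set.insert_inter_of_notMem hu]
        exact hPC
      · have hv : ({v} : Set V) ∪ (P : Set V) = (P : Set V) :=
          Set.union_eq_right.mpr (by simpa using hvP)
        have key : (G.induce (({u, v} : Set V) ∪ (P : Set V))).Connected := by
          refine SimpleGraph.induce_union_connected
            (SimpleGraph.induce_pair_connected_of_adj h).preconnected hPconn.preconnected ⟨v, ?_, ?_⟩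
          · simp
          · simpa using hvP
        rw [Set.insert_union, hv] at key
        rw [Finset.coe_insert]
        exact key

/-- The main counting lemma: an injection plus one extra set. -/
private lemma count_lemma (G : SimpleGraph V) (W : Finset V)
    (H : SimpleGraph {x // x ∈ W})
    (hsub : ∀ a b : {x // x ∈ W}, H.Adj a b → G.Adj a.1 b.1)
    (a : {x // x ∈ W}) (j : V) (P : Finset V) (C : Set V)
    (hjP : j ∈ P) (haP : a.1 ∈ P)
    (hPconn : (G.induce (P : Set V)).Connected)
    (hPC : (P : Set V) ∩ C = {a.1})
    (hIC : ∀ I : Finset {x // x ∈ W}, a ∈ I →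
      (H.induce (I : Set {x // x ∈ W})).Connected →
      Subtype.val '' (I : Set {x // x ∈ W}) ⊆ C)
    (extra : Finset V) (hej : j ∈ extra)
    (heconn : (G.induce (extra : Set V)).Connected)
    (hextra : ∀ I : Finset {x // x ∈ W}, a ∈ I →
      (H.induce (I : Set {x // x ∈ W})).Connected →
      I.map (Function.Embedding.subtype _) ∪ P ≠ extra) :
    kOf H a < kOf G j := by
  set e : {x // x ∈ W} ↪ V := Function.Embedding.subtype _ with he
  set sH := Finset.univ.filter fun I : Finset {x // x ∈ W} =>
    a ∈ I ∧ (H.induce (I : Set {x // x ∈ W})).Connected with hsH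
  set sG := Finset.univ.filter fun J : Finset V =>
    j ∈ J ∧ (G.induce (J : Set V)).Connected with hsG
  have memH : ∀ I, I ∈ sH ↔ a ∈ I ∧ (H.induce (I : Set {x // x ∈ W})).Connected := by
    intro I; simp [hsH]
  have memG : ∀ J, J ∈ sG ↔ j ∈ J ∧ (G.induce (J : Set V)).Connected := by
    intro J; simp [hsG]
  set Φ : Finset {x // x ∈ W} → Finset V := fun I => I.map e ∪ P with hΦ
  have hmapcoe : ∀ I : Finset {x // x ∈ W},
      (↑(I.map e) : Set V) = Subtype.val '' (I : Set {x // x ∈ W}) := by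
    intro I; rw [Finset.coe_map]; rfl
  -- Φ maps into sG
  have hmaps : ∀ I ∈ sH, Φ I ∈ sG := by
    intro I hI
    rw [memH] at hI
    rw [memG]
    constructor
    · exact Finset.mem_union_right _ hjP
    · rw [show Φ I = I.map e ∪ P from rfl, Finset.coe_union, hmapcoe]
      refine SimpleGraph.induce_union_connected
        (image_connected G W H hsub I hI.2).preconnected hPconn.preconnected ⟨(a : V), ⟨a, hI.1, rfl⟩, haP⟩
  -- key set identity for injectivity
  have hkey : ∀ I ∈ sH, (↑(Φ I) : Set V) ∩ C = (↑(I.map e) : Set V) := by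
    intro I hI
    rw [memH] at hI
    have hA : (↑(I.map e) : Set V) ⊆ C := by
      rw [hmapcoe]; exact hIC I hI.1 hI.2
    have hsing : ({(a : V)} : Set V) ⊆ (↑(I.map e) : Set V) := by
      rw [hmapcoe]
      exact Set.singleton_subset_iff.mpr ⟨a, hI.1, rfl⟩
    rw [show Φ I = I.map e ∪ P from rfl, Finset.coe_union]
    rw [Set.union_inter_distrib_right, hPC, Set.inter_eq_self_of_subset_left hA,
      Set.union_eq_left.mpr hsing]
  have hinj : Set.InjOn Φ sH := by
    intro I1 h1 I2 h2 heq
    have : (↑(I1.map e) : Set V) = (↑(I2.map e) : Set V) := by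
      rw [← hkey I1 h1, ← hkey I2 h2, heq]
    have := Finset.coe_injective this
    exact Finset.map_injective e this
  -- extra is in sG but not in the image
  have hextraG : extra ∈ sG := (memG extra).mpr ⟨hej, heconn⟩
  have hextraIm : extra ∉ sH.image Φ := by
    intro hmem
    obtain ⟨I, hI, hIe⟩ := Finset.mem_image.mp hmem
    rw [memH] at hI
    exact hextra I hI.1 hI.2 hIe
  have hsubs : insert extra (sH.image Φ) ⊆ sG := by
    refine Finset.insert_subset hextraG ?_
    intro J hJ
    obtain ⟨I, hI, hIe⟩ := Finset.mem_image.mp hJ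
    exact hIe ▸ hmaps I hI
  have hcard1 : sH.card + 1 ≤ sG.card := by
    have h1 : (sH.image Φ).card = sH.card := Finset.card_image_of_injOn hinj
    have h2 : (insert extra (sH.image Φ)).card = sH.card + 1 := by
      rw [Finset.card_insert_of_notMem hextraIm, h1]
    calc sH.card + 1 = (insert extra (sH.image Φ)).card := h2.symm
      _ ≤ sG.card := Finset.card_le_card hsubs
  have hH' : kOf H a = sH.card := by
    rw [kOf, hsH]
    congr!
  have hG' : kOf G j = sG.card := by
    rw [kOf, hsG]
  omega

/-- For every vertex `j` of `G` there is a vertex `a` of `H` with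
`1 < k_a(H) < k_j(G)`. -/
private lemma exists_lt (G : SimpleGraph V) (hG : G.Connected) (W : Finset V)
    (H : SimpleGraph {x // x ∈ W})
    (hsub : ∀ a b : {x // x ∈ W}, H.Adj a b → G.Adj a.1 b.1)
    (hcard : W.card < Fintype.card V)
    (m : {x // x ∈ W}) (hm : 1 < kOf H m) (j : V) :
    ∃ a : {x // x ∈ W}, 1 < kOf H a ∧ kOf H a < kOf G j := by
  classical
  set C : Set V := Subtype.val '' {x : {x // x ∈ W} | H.Reachable m x} with hC
  have hmC : (m : V) ∈ C := ⟨m, by exact SimpleGraph.Reachable.refl m, rfl⟩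
  have hCW : C ⊆ (↑W : Set V) := by
    rintro v ⟨x, _, rfl⟩; exact x.2
  have hIC : ∀ (a : {x // x ∈ W}), H.Reachable m a →
      ∀ I : Finset {x // x ∈ W}, a ∈ I →
      (H.induce (I : Set {x // x ∈ W})).Connected →
      Subtype.val '' (I : Set {x // x ∈ W}) ⊆ C := by
    intro a hra I haI hconn
    rintro v ⟨x, hxI, rfl⟩
    refine ⟨x, hra.trans ?_, rfl⟩
    have h1 : (H.induce (I : Set {x // x ∈ W})).Reachable ⟨a, haI⟩ ⟨x, hxI⟩ :=
      hconn.preconnected _ _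
    exact h1.map (⟨Subtype.val, fun hab => hab⟩ :
      H.induce (I : Set {x // x ∈ W}) →g H)
  have hnW : ∃ v, v ∉ W := by
    by_contra hcon
    push_neg at hcon
    have : W = Finset.univ := Finset.eq_univ_iff_forall.mpr hcon
    rw [this, Finset.card_univ] at hcard
    exact lt_irrefl _ hcard
  by_cases hjC : j ∈ C
  · obtain ⟨a, hra, haj⟩ := hjC
    refine ⟨a, one_lt_kOf_of_reachable H hra hm, ?_⟩
    refine count_lemma G W H hsub a j {j} C (by simp) (by simp [haj])
      (singletonConnF G j) ?_ (hIC a hra) Finset.univ (by simp) ?_ ?_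
    · simp only [Finset.coe_singleton]
      rw [← haj]
      exact Set.inter_eq_self_of_subset_left
        (Set.singleton_subset_iff.mpr (haj ▸ (⟨a, hra, haj⟩ : j ∈ C)))
    · rw [Finset.coe_univ]
      exact SimpleGraph.Connected.map (G.induceUnivIso).symm.toHom
        (G.induceUnivIso).symm.toEquiv.surjective hG
    · intro I _ _ heq
      obtain ⟨v, hv⟩ := hnW
      have : v ∈ I.map (Function.Embedding.subtype _) ∪ ({j} : Finset V) := by
        rw [heq]; exact Finset.mem_univ v
      rcases Finset.mem_union.mp this with h | h
      · obtain ⟨x, _, rfl⟩ := Finset.mem_map.mp h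
        exact hv x.2
      · rw [Finset.mem_singleton] at h
        subst h
        exact hv (haj ▸ a.2)
  · obtain ⟨w⟩ := hG.preconnected j (m : V)
    obtain ⟨P, aa, haaC, hjP, haaP, hPC, hPconn⟩ := prefix_lemma G C w hmC
    obtain ⟨a, hra, rfl⟩ := haaC
    refine ⟨a, one_lt_kOf_of_reachable H hra hm, ?_⟩
    refine count_lemma G W H hsub a j P C hjP haaP hPconn hPC (hIC a hra)
      {j} (by simp) (singletonConnF G j) ?_
    intro I _ _ heq
    have : (a : V) ∈ ({j} : Finset V) := by
      rw [← heq]; exact Finset.mem_union_right _ haaP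
    rw [Finset.mem_singleton] at this
    apply hjC
    rw [← this]
    exact ⟨a, hra, rfl⟩

end Aux

/-- Let `G` be a connected simple graph and `H` a (not
necessarily induced) subgraph of `G` with strictly fewer vertices, such that
both graphs have some vertex with `k_i > 1`. Then
`min { k_i(H) : k_i(H) > 1 } < min { k_i(G) : k_i(G) > 1 }`. -/
theorem min_kOf_strict_subgraph_lt {V : Type*} [Fintype V] (G : SimpleGraph V)
    (hG : G.Connected)
    (W : Finset V) (H : SimpleGraph {x // x ∈ W})
    (hsub : ∀ a b : {x // x ∈ W}, H.Adj a b → G.Adj a.1 b.1)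
    (hcard : W.card < Fintype.card V)
    (hH : ∃ m : {x // x ∈ W}, 1 < kOf H m)
    (hGk : ∃ j : V, 1 < kOf G j) :
    sInf {k : ℕ | ∃ i : {x // x ∈ W}, 1 < kOf H i ∧ kOf H i = k} <
      sInf {k : ℕ | ∃ j : V, 1 < kOf G j ∧ kOf G j = k} := by
  obtain ⟨m, hm⟩ := hH
  have hne : {k : ℕ | ∃ j : V, 1 < kOf G j ∧ kOf G j = k}.Nonempty := by
    obtain ⟨j, hj⟩ := hGk
    exact ⟨kOf G j, j, hj, rfl⟩
  obtain ⟨j0, hj0, hj0eq⟩ := Nat.sInf_mem hne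
  obtain ⟨a, ha1, halt⟩ := exists_lt G hG W H hsub hcard m hm j0
  calc sInf {k : ℕ | ∃ i : {x // x ∈ W}, 1 < kOf H i ∧ kOf H i = k}
      ≤ kOf H a := Nat.sInf_le ⟨a, ha1, rfl⟩
    _ < kOf G j0 := halt
    _ = _ := hj0eq
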